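/- Let α and β be nonempty finite types. Let π₁ : ℝ → α → ℝ satisfy ∑_{a ∈ α} π₁ θ a = 1 for every θ, each θ ↦ π₁ θ a differentiable at θ₀, and π₁ θ₀ a > 0. Let π₂ : α → β → ℝ satisfy π₂ a b ≥ 0 and ∑_{b ∈ β} π₂ a b = 1 for every a. Let q : α → ℝ satisfy q ã ≥ 0 and ∑_{ã ∈ α} q ã = 1, and let R : α → β → ℝ. Define J(θ) := ∑_{a ∈ α} ∑_{b ∈ β} π₁ θ a · π₂ a b · R a b and the counterfactual return G⁻ := ∑_{ã ∈ α} ∑_{b ∈ β} q ã · π₂ ã b · R ã b. Then J is differentiable at θ₀ and deriv J θ₀ = ∑_{a ∈ α} ∑_{b ∈ β} π₁ θ₀ a · π₂ a b · (deriv (fun θ => Real.log (π₁ θ a)) θ₀) · (R a b − G⁻). -/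

import Mathlib

open Finset

/-- Single-turn specialization of Theorem 1 for the first agent in a two-agent
autoregressive pipeline with downstream resampling: the counterfactual return
`G⁻` is obtained by replacing the first agent's proposal with a draw from the
replacement distribution `q` and resampling the downstream proposal. -/
theorem first_agent_policy_gradient_with_counterfactual_baseline
    {α β : Type*} [Fintype α] [Nonempty α] [Fintype β] [Nonempty β]
    (π₁ : ℝ → α → ℝ) (θ₀ : ℝ)
    (hsum₁ : ∀ θ, ∑ a, π₁ θ a = 1)
    (hdiff₁ : ∀ a, DifferentiableAt ℝ (fun θ => π₁ θ a) θ₀)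
    (hpos₁ : ∀ a, 0 < π₁ θ₀ a)
    (π₂ : α → β → ℝ) (hπ₂ : ∀ a b, 0 ≤ π₂ a b) (hsum₂ : ∀ a, ∑ b, π₂ a b = 1)
    (q : α → ℝ) (hq : ∀ a, 0 ≤ q a) (hqsum : ∑ a, q a = 1)
    (R : α → β → ℝ) :
    DifferentiableAt ℝ (fun θ => ∑ a, ∑ b, π₁ θ a * π₂ a b * R a b) θ₀ ∧
      deriv (fun θ => ∑ a, ∑ b, π₁ θ a * π₂ a b * R a b) θ₀
        = ∑ a, ∑ b, π₁ θ₀ a * π₂ a b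
            * deriv (fun θ => Real.log (π₁ θ a)) θ₀
            * (R a b - ∑ a', ∑ b', q a' * π₂ a' b' * R a' b') := by
  classical
  set G : ℝ := ∑ a', ∑ b', q a' * π₂ a' b' * R a' b' with hG
  set d : α → ℝ := fun a => deriv (fun θ => π₁ θ a) θ₀ with hd
  -- differentiability
  have hdiffJ : DifferentiableAt ℝ (fun θ => ∑ a, ∑ b, π₁ θ a * π₂ a b * R a b) θ₀ := by
    apply DifferentiableAt.fun_sum
    intro a _
    apply DifferentiableAt.fun_sum
    intro b _
    exact ((hdiff₁ a).mul_const _).mul_const _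
  refine ⟨hdiffJ, ?_⟩
  -- sum of derivatives is zero
  have hzero : ∑ a, d a = 0 := by
    have h1 : HasDerivAt (fun θ => ∑ a, π₁ θ a) (∑ a, d a) θ₀ :=
      HasDerivAt.fun_sum fun a _ => (hdiff₁ a).hasDerivAt
    have h2 : (fun θ => ∑ a, π₁ θ a) = fun _ => (1:ℝ) := funext fun θ => hsum₁ θ
    rw [h2] at h1
    have := h1.deriv
    simpa using this.symm
  -- log derivative
  have hlog : ∀ a, deriv (fun θ => Real.log (π₁ θ a)) θ₀ = d a / π₁ θ₀ a := fun a =>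
    ((hdiff₁ a).hasDerivAt.log (hpos₁ a).ne').deriv
  -- compute deriv of J
  have hJ : deriv (fun θ => ∑ a, ∑ b, π₁ θ a * π₂ a b * R a b) θ₀
      = ∑ a, ∑ b, d a * π₂ a b * R a b := by
    have h : HasDerivAt (fun θ => ∑ a, ∑ b, π₁ θ a * π₂ a b * R a b)
        (∑ a, ∑ b, d a * π₂ a b * R a b) θ₀ :=
      HasDerivAt.fun_sum fun a _ => HasDerivAt.fun_sum fun b _ =>
        ((hdiff₁ a).hasDerivAt.mul_const _).mul_const _
    exact h.deriv
  rw [hJ]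
  have hterm : ∀ a b, π₁ θ₀ a * π₂ a b * deriv (fun θ => Real.log (π₁ θ a)) θ₀ * (R a b - G)
      = d a * π₂ a b * R a b - d a * π₂ a b * G := by
    intro a b
    have hne := (hpos₁ a).ne'
    rw [hlog a]
    field_simp
  rw [Finset.sum_congr rfl fun a _ => Finset.sum_congr rfl fun b _ => hterm a b]
  have : ∑ a, ∑ b, (d a * π₂ a b * R a b - d a * π₂ a b * G)
      = (∑ a, ∑ b, d a * π₂ a b * R a b) - ∑ a, ∑ b, d a * π₂ a b * G := by
    rw [← Finset.sum_sub_distrib]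
    exact Finset.sum_congr rfl fun a _ => Finset.sum_sub_distrib _ _
  rw [this]
  have hbase : ∑ a, ∑ b, d a * π₂ a b * G = 0 := by
    have : ∀ a, ∑ b, d a * π₂ a b * G = d a * G := by
      intro a
      rw [← Finset.sum_mul, ← Finset.mul_sum, hsum₂ a, mul_one]
    rw [Finset.sum_congr rfl fun a _ => this a, ← Finset.sum_mul, hzero, zero_mul]
  rw [hbase, sub_zero]
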